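/- arXiv:2504.11032 — 2 statements merged into one kernel-verified Lean document; each statement's English description precedes it below -/
import Mathlib

section
/- Let p be a prime, k ≥ 1, G = (ℤ/p^kℤ)³, and let K ≤ G be a subgroup such that G/K is generated by two elements. Then K contains an element of order p^k. -/
theorem kernel_of_two_generated_quotient_contains_max_order_element
    (p k : ℕ) (hp : p.Prime) (hk : 1 ≤ k)
    (K : AddSubgroup (ZMod (p ^ k) × ZMod (p ^ k) × ZMod (p ^ k)))
    (h2gen : ∃ x y : (ZMod (p ^ k) × ZMod (p ^ k) × ZMod (p ^ k)) ⧸ K,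
      AddSubgroup.closure {x, y} = ⊤) :
    ∃ g ∈ K, addOrderOf g = p ^ k := by
  haveI : Fact p.Prime := ⟨hp⟩
  haveI : NeZero (p ^ k) := ⟨pow_ne_zero _ hp.pos.ne'⟩
  by_contra hcon
  push_neg at hcon
  -- every element of K is killed by p^(k-1)
  have hkill : ∀ g ∈ K, (p ^ (k - 1)) • g = 0 := by
    intro g hg
    have hq : (p ^ k) • g = 0 := by
      have : ∀ x : ZMod (p ^ k), (p ^ k) • x = 0 := by
        intro x
        rw [nsmul_eq_mul, ZMod.natCast_self, zero_mul]
      exact Prod.ext (this _) (Prod.ext (this _) (this _))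
    have hdvd : addOrderOf g ∣ p ^ k := addOrderOf_dvd_of_nsmul_eq_zero hq
    obtain ⟨j, hj, hje⟩ := (Nat.dvd_prime_pow hp).1 hdvd
    have hjlt : j ≤ k - 1 := by
      rcases Nat.lt_or_ge j k with h | h
      · omega
      · exfalso; exact hcon g hg (by rw [hje]; congr 1; omega)
    have : addOrderOf g ∣ p ^ (k - 1) := hje ▸ pow_dvd_pow p hjlt
    exact addOrderOf_dvd_iff_nsmul_eq_zero.mp this
  -- components of elements of K reduce to 0 mod p
  have hcomp : ∀ x : ZMod (p ^ k), (p ^ (k - 1)) • x = 0 →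
      (ZMod.castHom (dvd_pow_self p (by omega : k ≠ 0)) (ZMod p)) x = 0 := by
    intro x hx
    rw [nsmul_eq_mul] at hx
    have hx' : ((p ^ (k - 1) * x.val : ℕ) : ZMod (p ^ k)) = 0 := by
      push_cast
      rw [ZMod.natCast_val, ZMod.cast_id, ← Nat.cast_pow]
      exact hx
    have hdvd : p ^ k ∣ p ^ (k - 1) * x.val := (ZMod.natCast_eq_zero_iff _ _).1 hx'
    have hpk : p ^ k = p ^ (k - 1) * p := by rw [← pow_succ]; congr 1; omega
    have hdvd' : p ^ (k - 1) * p ∣ p ^ (k - 1) * x.val := by rw [← hpk]; exact hdvd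
    have hpdvd : p ∣ x.val :=
      (mul_dvd_mul_iff_left (pow_ne_zero (k - 1) hp.pos.ne')).1 hdvd'
    rw [ZMod.castHom_apply, ← ZMod.natCast_val, ZMod.natCast_eq_zero_iff]
    exact hpdvd
  -- the reduction map
  set c : ZMod (p ^ k) →+ ZMod p :=
    (ZMod.castHom (dvd_pow_self p (by omega : k ≠ 0)) (ZMod p)).toAddMonoidHom with hc
  set f : (ZMod (p ^ k) × ZMod (p ^ k) × ZMod (p ^ k)) →+ ZMod p × ZMod p × ZMod p :=
    c.prodMap (c.prodMap c) with hf
  have hcsurj : Function.Surjective c := by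
    intro a
    obtain ⟨n, rfl⟩ := ZMod.natCast_zmod_surjective a
    exact ⟨(n : ZMod (p ^ k)), by simp [hc]⟩
  have hfsurj : Function.Surjective f := by
    exact Prod.map_surjective.2 ⟨hcsurj, Prod.map_surjective.2 ⟨hcsurj, hcsurj⟩⟩
  have hker : ∀ g ∈ K, f g = 0 := by
    intro g hg
    have h1 := hkill g hg
    have e1 : (p ^ (k - 1)) • g.1 = 0 := congrArg Prod.fst h1
    have e2 : (p ^ (k - 1)) • g.2.1 = 0 := congrArg Prod.fst (congrArg Prod.snd h1)
    have e3 : (p ^ (k - 1)) • g.2.2 = 0 := congrArg Prod.snd (congrArg Prod.snd h1)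
    exact Prod.ext (hcomp _ e1) (Prod.ext (hcomp _ e2) (hcomp _ e3))
  -- descend to the quotient
  obtain ⟨x, y, hxy⟩ := h2gen
  set F : ((ZMod (p ^ k) × ZMod (p ^ k) × ZMod (p ^ k)) ⧸ K) →+ ZMod p × ZMod p × ZMod p :=
    QuotientAddGroup.lift K f hker with hF
  have hFsurj : Function.Surjective F := by
    intro a
    obtain ⟨g, rfl⟩ := hfsurj a
    exact ⟨QuotientAddGroup.mk g, rfl⟩
  have htop : AddSubgroup.closure ({F x, F y} : Set (ZMod p × ZMod p × ZMod p)) = ⊤ := by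
    have := congrArg (AddSubgroup.map F) hxy
    rw [AddSubgroup.map_top_of_surjective F hFsurj, AddMonoidHom.map_closure] at this
    rw [← this]
    congr 1
    exact (Set.image_pair F x y).symm
  -- contradiction via linear algebra over ZMod p
  have hspan : Submodule.span (ZMod p) ({F x, F y} : Set (ZMod p × ZMod p × ZMod p)) = ⊤ := by
    have h1 : (⊤ : AddSubgroup (ZMod p × ZMod p × ZMod p)) ≤
        (Submodule.span (ZMod p) ({F x, F y} : Set (ZMod p × ZMod p × ZMod p))).toAddSubgroup := by
      rw [← htop]
      exact (AddSubgroup.closure_le _).2 Submodule.subset_span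
    rw [eq_top_iff]
    intro v _
    exact h1 (AddSubgroup.mem_top v)
  have hle := finrank_span_le_card (R := ZMod p) ({F x, F y} : Set (ZMod p × ZMod p × ZMod p))
  rw [hspan] at hle
  have hr : Module.finrank (ZMod p) (ZMod p × ZMod p × ZMod p) = 3 := by
    simp [Module.finrank_prod]
  rw [finrank_top, hr] at hle
  have hcard : ({F x, F y} : Set (ZMod p × ZMod p × ZMod p)).toFinset.card ≤ 2 := by
    rw [Set.toFinset_insert, Set.toFinset_singleton]
    exact (Finset.card_insert_le _ _).trans (by simp)
  omega
end

section
/- Let p be a prime, k ≥ 1, G = (ℤ/p^kℤ)³, and let K₁, K₂ ≤ G be subgroups with K₁ ∩ K₂ = {0} such that both G/K₁ and G/K₂ are generated by two elements. Then G/K₁ ≅ ℤ/p^kℤ × ℤ/p^{b}ℤ for some 0 ≤ b ≤ k, i.e., G/K₁ contains an element of order p^k. -/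
private lemma zsmul_val_cast {N : ℕ} [NeZero N] {A : Type*} [AddCommGroup A]
    (x : A) (hx : N • x = 0) (m : ℤ) : (((m : ZMod N).val : ℤ)) • x = m • x := by
  have h0 : ((m - ((m : ZMod N).val : ℤ) : ℤ) : ZMod N) = 0 := by
    push_cast
    simp [ZMod.natCast_val, ZMod.cast_id]
  rw [ZMod.intCast_zmod_eq_zero_iff_dvd] at h0
  obtain ⟨d, hd⟩ := h0
  have hNx : (N : ℤ) • x = 0 := by rw [natCast_zsmul]; exact hx
  have hm : m = ((m : ZMod N).val : ℤ) + N * d := by linarith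
  have key : m • x = ((((m : ZMod N).val : ℤ)) + N * d) • x := by rw [← hm]
  rw [key, add_smul, mul_comm, mul_smul, hNx, smul_zero, add_zero]

private lemma zmod_p_smul_eq {p k : ℕ} (hp : p.Prime) (hk : 1 ≤ k) [NeZero (p ^ k)]
    (a : ZMod (p ^ k)) (ha : p • a = 0) : ∃ b : ZMod (p ^ k), a = p ^ (k - 1) • b := by
  have h1 : ((p * a.val : ℕ) : ZMod (p ^ k)) = 0 := by
    push_cast
    rw [ZMod.natCast_val, ZMod.cast_id]
    rw [nsmul_eq_mul] at ha
    exact_mod_cast ha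
  rw [ZMod.natCast_eq_zero_iff] at h1
  have hpk : p ^ k = p * p ^ (k - 1) := by
    rw [← pow_succ']
    congr 1
    omega
  obtain ⟨c, hc'⟩ := h1
  have hc : a.val = p ^ (k - 1) * c := by
    have hmm : p * a.val = p * (p ^ (k - 1) * c) := by rw [hc', hpk]; ring
    exact Nat.eq_of_mul_eq_mul_left hp.pos hmm
  refine ⟨(c : ZMod (p ^ k)), ?_⟩
  have hv : ((a.val : ℕ) : ZMod (p ^ k)) = a := by simp [ZMod.natCast_val, ZMod.cast_id]
  rw [← hv, hc]
  push_cast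
  rw [nsmul_eq_mul]
  push_cast
  ring

theorem quotient_by_minimal_kernel_has_max_order_element
    (p k : ℕ) (hp : p.Prime) (hk : 1 ≤ k)
    (K₁ K₂ : AddSubgroup (ZMod (p ^ k) × ZMod (p ^ k) × ZMod (p ^ k)))
    (hmin : K₁ ⊓ K₂ = ⊥)
    (h1 : ∃ x y : (ZMod (p ^ k) × ZMod (p ^ k) × ZMod (p ^ k)) ⧸ K₁,
      AddSubgroup.closure {x, y} = ⊤)
    (h2 : ∃ x y : (ZMod (p ^ k) × ZMod (p ^ k) × ZMod (p ^ k)) ⧸ K₂,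
      AddSubgroup.closure {x, y} = ⊤) :
    ∃ x : (ZMod (p ^ k) × ZMod (p ^ k) × ZMod (p ^ k)) ⧸ K₁,
      addOrderOf x = p ^ k := by
  by_contra hcon
  push_neg at hcon
  haveI : Fact p.Prime := ⟨hp⟩
  haveI : NeZero (p ^ k) := ⟨pow_ne_zero k hp.ne_zero⟩
  set G := ZMod (p ^ k) × ZMod (p ^ k) × ZMod (p ^ k) with hG
  have hNa : ∀ a : ZMod (p ^ k), (p ^ k) • a = 0 := fun a => by
    rw [nsmul_eq_mul, ZMod.natCast_self, zero_mul]
  have hNG : ∀ g : G, (p ^ k) • g = 0 := fun g =>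
    Prod.ext (hNa _) (Prod.ext (hNa _) (hNa _))
  have hexp1 : ∀ x : G ⧸ K₁, (p ^ k) • x = 0 := by
    intro x
    induction x using QuotientAddGroup.induction_on with
    | H g => rw [← QuotientAddGroup.mk_nsmul K₁ g (p ^ k), hNG g, QuotientAddGroup.mk_zero]
  have hexp2 : ∀ x : G ⧸ K₂, (p ^ k) • x = 0 := by
    intro x
    induction x using QuotientAddGroup.induction_on with
    | H g => rw [← QuotientAddGroup.mk_nsmul K₂ g (p ^ k), hNG g, QuotientAddGroup.mk_zero]
  -- Step A : p^(k-1) • g ∈ K₁ for all g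
  have hK1 : ∀ g : G, (p ^ (k - 1)) • g ∈ K₁ := by
    intro g
    have hdvd : addOrderOf ((g : G ⧸ K₁)) ∣ p ^ k :=
      addOrderOf_dvd_of_nsmul_eq_zero (hexp1 _)
    obtain ⟨i, hik, hi⟩ := (Nat.dvd_prime_pow hp).mp hdvd
    have hik' : i ≤ k - 1 := by
      rcases Nat.lt_or_ge i k with h | h
      · omega
      · exfalso
        apply hcon ((g : G ⧸ K₁))
        rw [hi]
        congr 1
        omega
    have hdvd' : addOrderOf ((g : G ⧸ K₁)) ∣ p ^ (k - 1) := by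
      rw [hi]; exact pow_dvd_pow p hik'
    have h0 : (p ^ (k - 1)) • ((g : G ⧸ K₁)) = 0 :=
      addOrderOf_dvd_iff_nsmul_eq_zero.mp hdvd'
    rwa [← QuotientAddGroup.mk_nsmul K₁ g (p ^ (k - 1)), QuotientAddGroup.eq_zero_iff] at h0
  -- Step B : K₂ is nontrivial
  obtain ⟨x, y, hxy⟩ := h2
  have hsurj : Function.Surjective
      (fun a : ZMod (p ^ k) × ZMod (p ^ k) => a.1.val • x + a.2.val • y) := by
    intro z
    have hz : z ∈ AddSubgroup.closure ({x, y} : Set (G ⧸ K₂)) := hxy ▸ AddSubgroup.mem_top z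
    rw [AddSubgroup.mem_closure_pair] at hz
    obtain ⟨m, n, hmn⟩ := hz
    refine ⟨((m : ZMod (p ^ k)), (n : ZMod (p ^ k))), ?_⟩
    simp only
    rw [← natCast_zsmul x, ← natCast_zsmul y, zsmul_val_cast x (hexp2 x) m,
      zsmul_val_cast y (hexp2 y) n, hmn]
  have hcardQ : Nat.card (G ⧸ K₂) ≤ p ^ k * p ^ k := by
    have := Nat.card_le_card_of_surjective _ hsurj
    simpa [Nat.card_prod, Nat.card_zmod] using this
  have hcardG : Nat.card G = p ^ k * (p ^ k * p ^ k) := by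
    simp [hG, Nat.card_prod, Nat.card_zmod]
  have hmul := AddSubgroup.card_eq_card_quotient_mul_card_addSubgroup K₂
  have hKbig : 1 < Nat.card K₂ := by
    by_contra hle
    have hKpos : 0 < Nat.card K₂ := Nat.card_pos
    have hK1' : Nat.card K₂ = 1 := by omega
    rw [hcardG, hK1', mul_one] at hmul
    have : p ^ k * (p ^ k * p ^ k) ≤ p ^ k * p ^ k := hmul ▸ hcardQ
    have hpk : 1 < p ^ k := Nat.one_lt_pow (by omega) hp.one_lt
    nlinarith
  obtain ⟨z, hzK2, hz0⟩ : ∃ z ∈ K₂, z ≠ (0 : G) := by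
    rcases AddSubgroup.bot_or_exists_ne_zero K₂ with hbot | h
    · exfalso
      rw [hbot] at hKbig
      simp at hKbig
    · exact h
  -- Step C : get w ∈ K₂ with w ≠ 0 and p • w = 0
  have hzord : addOrderOf z ∣ p ^ k := addOrderOf_dvd_of_nsmul_eq_zero (hNG z)
  obtain ⟨i, hik, hi⟩ := (Nat.dvd_prime_pow hp).mp hzord
  have hi1 : 1 ≤ i := by
    by_contra h
    have hi0 : i = 0 := by omega
    rw [hi0, pow_zero] at hi
    exact hz0 (AddMonoid.addOrderOf_eq_one_iff.mp hi)
  set w : G := p ^ (i - 1) • z with hw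
  have hwK2 : w ∈ K₂ := AddSubgroup.nsmul_mem K₂ hzK2 _
  have hw0 : w ≠ 0 := by
    intro h
    have hdd : addOrderOf z ∣ p ^ (i - 1) := addOrderOf_dvd_of_nsmul_eq_zero h
    rw [hi] at hdd
    have h1 := Nat.le_of_dvd (pow_pos hp.pos _) hdd
    have h2 := Nat.pow_lt_pow_right hp.one_lt (by omega : i - 1 < i)
    omega
  have hpw : p • w = 0 := by
    have hpi : p * p ^ (i - 1) = p ^ i := by
      rw [← pow_succ']
      congr 1
      omega
    rw [hw, smul_smul, hpi, ← hi]
    exact addOrderOf_nsmul_eq_zero z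
  -- Step D : w = p^(k-1) • g for some g
  have hpw1 : p • w.1 = 0 := by have := congrArg Prod.fst hpw; exact this
  have hpw2 : p • w.2.1 = 0 := by have := congrArg (fun u : G => u.2.1) hpw; exact this
  have hpw3 : p • w.2.2 = 0 := by have := congrArg (fun u : G => u.2.2) hpw; exact this
  obtain ⟨b1, hb1⟩ := zmod_p_smul_eq hp hk w.1 hpw1
  obtain ⟨b2, hb2⟩ := zmod_p_smul_eq hp hk w.2.1 hpw2
  obtain ⟨b3, hb3⟩ := zmod_p_smul_eq hp hk w.2.2 hpw3
  have hwg : w = p ^ (k - 1) • ((b1, b2, b3) : G) := by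
    refine Prod.ext ?_ (Prod.ext ?_ ?_) <;>
      simp only [Prod.smul_fst, Prod.smul_snd] <;> assumption
  have hwK1 : w ∈ K₁ := by rw [hwg]; exact hK1 _
  have : w ∈ K₁ ⊓ K₂ := ⟨hwK1, hwK2⟩
  rw [hmin] at this
  exact hw0 (AddSubgroup.mem_bot.mp this)
end
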